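/- Let G be a group and K a symmetric subset of G with 1 ∈ K that generates G, and suppose K·K can be covered by finitely many left translates of K, i.e. K·K ⊆ ⋃_{i=1}^m g_i·K for some g₁, …, g_m ∈ G. Then for every subset B of G contained in some power Kᵖ (p ≥ 1), the set G \ B has only finitely many K⁴-components; that is, there is a finite subset S of G \ B such that every element of G \ B is joined to some element of S by a K⁴-chain in G \ B. -/

import Mathlib

open Set Pointwise

/-- One step of a `K`-chain inside the set `A`. -/
def KStep {G : Type*} [Group G] (K A : Set G) (x y : G) : Prop :=
  x ∈ A ∧ y ∈ A ∧ x⁻¹ * y ∈ K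

/-- `x` and `y` are joined by a `K`-chain inside `A`. -/
def KConn {G : Type*} [Group G] (K A : Set G) (x y : G) : Prop :=
  Relation.ReflTransGen (KStep K A) x y

private lemma KConn_mono {G : Type*} [Group G] {K K' A : Set G} (h : K ⊆ K')
    {x y : G} (hxy : KConn K A x y) : KConn K' A x y := by
  refine Relation.ReflTransGen.mono ?_ x y hxy
  rintro a b ⟨ha, hb, hab⟩
  exact ⟨ha, hb, h hab⟩

theorem bounded_geometry_finitely_many_K4_components {G : Type*} [Group G]
    (K : Set G) (hKsymm : K⁻¹ = K) (hK1 : (1 : G) ∈ K)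
    (hKgen : Subgroup.closure K = ⊤)
    (m : ℕ) (g : Fin m → G) (hcover : K * K ⊆ ⋃ i : Fin m, g i • K)
    (B : Set G) (p : ℕ) (hp : 1 ≤ p) (hB : B ⊆ K ^ p) :
    ∃ S : Finset G, (S : Set G) ⊆ Bᶜ ∧
      ∀ x ∈ Bᶜ, ∃ s ∈ S, KConn (K ^ 4) Bᶜ s x := by
  classical
  -- Step 1: every element lies in some power of K.
  have hpow : ∀ x : G, ∃ n, x ∈ K ^ n := by
    intro x
    have hx : x ∈ Subgroup.closure K := by rw [hKgen]; trivial
    refine Subgroup.closure_induction (fun y hy => ⟨1, by simpa using hy⟩)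
      ⟨0, by simp⟩ ?_ ?_ hx
    · rintro a b _ _ ⟨n, hn⟩ ⟨k, hk⟩
      exact ⟨n + k, by rw [pow_add]; exact Set.mul_mem_mul hn hk⟩
    · rintro a _ ⟨n, hn⟩
      refine ⟨n, ?_⟩
      have : a⁻¹ ∈ (K ^ n)⁻¹ := Set.inv_mem_inv.2 hn
      rwa [← inv_pow, hKsymm] at this
  -- Step 2: chain to K^(p+1) ∩ Bᶜ.
  have step1 : ∀ n, ∀ x ∈ K ^ n, x ∈ Bᶜ →
      ∃ s, s ∈ K ^ (p + 1) ∧ s ∈ Bᶜ ∧ KConn K Bᶜ s x := by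
    intro n
    induction n with
    | zero =>
      intro x hx hxB
      simp only [pow_zero, Set.mem_one] at hx
      subst hx
      exact ⟨1, Set.one_mem_pow hK1, hxB, Relation.ReflTransGen.refl⟩
    | succ n ih =>
      intro x hx hxB
      by_cases hxp : x ∈ K ^ (p + 1)
      · exact ⟨x, hxp, hxB, Relation.ReflTransGen.refl⟩
      · rw [pow_succ] at hx
        obtain ⟨y, hy, k, hk, rfl⟩ := hx
        have hyB : y ∈ Bᶜ := by
          intro hyB
          exact hxp (by rw [pow_succ]; exact Set.mul_mem_mul (hB hyB) hk)
        obtain ⟨s, hs1, hs2, hs3⟩ := ih y hy hyB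
        exact ⟨s, hs1, hs2, hs3.tail ⟨hyB, hxB, by simpa using hk⟩⟩
  -- Step 3: K^(n+1) is covered by finitely many translates of K.
  have step2 : ∀ n : ℕ, ∃ T : Finset G, K ^ (n + 1) ⊆ ⋃ t ∈ T, t • K := by
    intro n
    induction n with
    | zero =>
      refine ⟨Finset.image g Finset.univ, ?_⟩
      intro x hx
      have : x ∈ K * K := by
        rw [pow_one] at hx
        exact ⟨1, hK1, x, hx, one_mul x⟩
      obtain ⟨i, hi⟩ := Set.mem_iUnion.1 (hcover this)
      exact Set.mem_biUnion (Finset.mem_image_of_mem g (Finset.mem_univ i)) hi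
    | succ n ih =>
      obtain ⟨T, hT⟩ := ih
      refine ⟨Finset.image (fun q : G × Fin m => q.1 * g q.2)
        (T ×ˢ Finset.univ), ?_⟩
      intro x hx
      rw [pow_succ] at hx
      obtain ⟨y, hy, k, hk, rfl⟩ := hx
      obtain ⟨t, ht, a, ha, rfl⟩ := by
        have := hT hy
        simp only [Set.mem_iUnion, Set.mem_smul_set] at this
        exact this
      have hak : a * k ∈ K * K := Set.mul_mem_mul ha hk
      obtain ⟨i, hi⟩ := Set.mem_iUnion.1 (hcover hak)
      obtain ⟨b, hb, hib⟩ := hi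
      refine Set.mem_biUnion (Finset.mem_image.2
        ⟨(t, i), Finset.mem_product.2 ⟨ht, Finset.mem_univ i⟩, rfl⟩) ?_
      exact ⟨b, hb, by simp [mul_assoc, ← hib]⟩
  obtain ⟨T, hT⟩ := step2 p
  -- Choice of representatives.
  set f : G → G := fun t =>
    if h : ((t • K) ∩ Bᶜ).Nonempty then h.some else 1 with hf
  set T' := T.filter (fun t => ((t • K) ∩ Bᶜ).Nonempty) with hT'
  refine ⟨T'.image f, ?_, ?_⟩
  · intro s hs
    simp only [Finset.coe_image, Set.mem_image, Finset.mem_coe] at hs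
    obtain ⟨t, ht, rfl⟩ := hs
    have h := (Finset.mem_filter.1 ht).2
    simp only [hf, dif_pos h]
    exact h.some_mem.2
  · intro x hxB
    obtain ⟨n, hxn⟩ := hpow x
    have hxn' : x ∈ K ^ n := hxn
    obtain ⟨s₀, hs₀p, hs₀B, hconn⟩ := step1 n x hxn' hxB
    obtain ⟨t, ht, hst⟩ := Set.mem_iUnion₂.1 (hT hs₀p)
    have hne : ((t • K) ∩ Bᶜ).Nonempty := ⟨s₀, hst, hs₀B⟩
    have htT' : t ∈ T' := Finset.mem_filter.2 ⟨ht, hne⟩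
    refine ⟨f t, Finset.mem_image_of_mem f htT', ?_⟩
    have hft : f t ∈ (t • K) ∩ Bᶜ := by
      simp only [hf, dif_pos hne]; exact hne.some_mem
    -- single K^4 step from f t to s₀, then the K-chain (K ⊆ K^4).
    have hstep : KStep (K ^ 4) Bᶜ (f t) s₀ := by
      refine ⟨hft.2, hs₀B, ?_⟩
      obtain ⟨a, ha, hat⟩ := hft.1
      obtain ⟨b, hb, hbt⟩ := hst
      simp only [smul_eq_mul] at hat hbt
      have : (f t)⁻¹ * s₀ = a⁻¹ * b := by
        rw [← hat, ← hbt]; group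
      rw [this]
      have h2 : a⁻¹ * b ∈ K * K := by
        refine Set.mul_mem_mul ?_ hb
        rw [← hKsymm]; exact Set.inv_mem_inv.2 ha
      have : K * K ⊆ K ^ 4 := by
        rw [← pow_two]
        exact Set.pow_subset_pow_right hK1 (by norm_num)
      exact this h2
    have hK4 : K ⊆ K ^ 4 := by
      intro y hy
      have : y ∈ K ^ 1 := by simpa using hy
      exact Set.pow_subset_pow_right hK1 (by norm_num) this
    exact (Relation.ReflTransGen.single hstep).trans (KConn_mono hK4 hconn)
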